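/- Let R be a nontrivial artinian commutative ring. Then there exists a positive integer n such that Ω(R) = {1, …, n}. In particular, Ω(R) = {1} if and only if R is a field. -/

import Mathlib

/-- A proper ideal `I` is `n`-absorbing if whenever a product of `n + 1` elements
lies in `I`, the product of some `n` of them (in increasing index order) lies in `I`. -/
def IsNAbsorbing {R : Type*} [CommRing R] (n : ℕ) (I : Ideal R) : Prop :=
  ∀ x : Fin (n + 1) → R, (∏ i, x i) ∈ I →
    ∃ ι : Fin n → Fin (n + 1), StrictMono ι ∧ (∏ j, x (ι j)) ∈ I

/-- `omegaR I` is the smallest positive integer `n` such that `I` is `n`-absorbing,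
and `∞` if no such `n` exists. -/
noncomputable def omegaR {R : Type*} [CommRing R] (I : Ideal R) : ℕ∞ :=
  sInf {w : ℕ∞ | ∃ n : ℕ, 0 < n ∧ w = (n : ℕ∞) ∧ IsNAbsorbing n I}

/-- `Ω(R)` is the set of `ω`-values of proper ideals of `R`. -/
noncomputable def OmegaSet (R : Type*) [CommRing R] : Set ℕ∞ :=
  {w | ∃ I : Ideal R, I ≠ ⊤ ∧ omegaR I = w}

namespace OmegaAux

open Finset

variable {R : Type*} [CommRing R]

/-- Exact-cardinality `Finset` version of `n`-absorbing. -/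
def EAbs (n : ℕ) (I : Ideal R) : Prop :=
  ∀ (s : Finset ℕ) (x : ℕ → R), s.card = n + 1 → (∏ i ∈ s, x i) ∈ I →
    ∃ t, t ⊆ s ∧ t.card = n ∧ (∏ i ∈ t, x i) ∈ I

/-- At-least-cardinality `Finset` version of `n`-absorbing. -/
def GAbs (n : ℕ) (I : Ideal R) : Prop :=
  ∀ (s : Finset ℕ) (x : ℕ → R), n < s.card → (∏ i ∈ s, x i) ∈ I →
    ∃ t, t ⊆ s ∧ t.card = n ∧ (∏ i ∈ t, x i) ∈ I

theorem prod_orderEmbOfFin {M : Type*} [CommMonoid M] {α : Type*} [LinearOrder α]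
    (s : Finset α) {k : ℕ} (h : s.card = k) (x : α → M) :
    (∏ i : Fin k, x (s.orderEmbOfFin h i)) = ∏ i ∈ s, x i := by
  have himg : Finset.image (s.orderEmbOfFin h) Finset.univ = s := by
    ext a
    simp only [Finset.mem_image, Finset.mem_univ, true_and]
    constructor
    · rintro ⟨i, rfl⟩; exact s.orderEmbOfFin_mem h i
    · intro ha
      have := s.range_orderEmbOfFin h
      have : a ∈ Set.range (s.orderEmbOfFin h) := by rw [this]; exact ha
      rcases this with ⟨i, hi⟩; exact ⟨i, hi⟩
  conv_rhs => rw [← himg]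
  rw [Finset.prod_image (fun a _ b _ hab => (s.orderEmbOfFin h).injective hab)]

/-- padding a subproduct up to a given size -/
theorem pad {I : Ideal R} {t s : Finset ℕ} {x : ℕ → R} {n : ℕ} (hts : t ⊆ s)
    (h : (∏ i ∈ t, x i) ∈ I) (hn : t.card ≤ n) (hs : n ≤ s.card) :
    ∃ u, u ⊆ s ∧ u.card = n ∧ (∏ i ∈ u, x i) ∈ I := by
  obtain ⟨u, htu, hus, hcard⟩ := Finset.exists_subsuperset_card_eq hts hn hs
  refine ⟨u, hus, hcard, ?_⟩
  rw [← Finset.prod_sdiff htu]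
  exact Ideal.mul_mem_left _ _ h

theorem isNAbsorbing_of_eabs {n : ℕ} {I : Ideal R} (h : EAbs n I) : IsNAbsorbing n I := by
  intro x hx
  set y : ℕ → R := fun i => if h : i < n + 1 then x ⟨i, h⟩ else 1 with hy
  have hprod : (∏ i ∈ Finset.range (n + 1), y i) = ∏ i, x i := by
    rw [← Fin.prod_univ_eq_prod_range]
    exact Finset.prod_congr rfl fun i _ => by simp [hy, i.isLt, Nat.not_lt.mpr (Nat.lt_succ_iff.mp i.isLt)]
  obtain ⟨t, hts, htc, htm⟩ := h (Finset.range (n + 1)) y (Finset.card_range _)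
    (by rw [hprod]; exact hx)
  have hlt : ∀ m ∈ t, m < n + 1 := fun m hm => Finset.mem_range.mp (hts hm)
  set t' : Finset (Fin (n + 1)) := t.attachFin hlt with ht'
  have htc' : t'.card = n := by rw [ht', Finset.card_attachFin]; exact htc
  refine ⟨t'.orderEmbOfFin htc', (t'.orderEmbOfFin htc').strictMono, ?_⟩
  rw [prod_orderEmbOfFin t' htc' x]
  have himg : t'.image (Fin.val) = t := by
    ext a
    simp only [Finset.mem_image]
    constructor
    · rintro ⟨i, hi, rfl⟩; exact (Finset.mem_attachFin hlt).mp hi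
    · intro ha; exact ⟨⟨a, hlt a ha⟩, (Finset.mem_attachFin hlt).mpr ha, rfl⟩
  have : (∏ i ∈ t', x i) = ∏ i ∈ t, y i := by
    conv_rhs => rw [← himg]
    rw [Finset.prod_image (fun a _ b _ hab => Fin.val_injective hab)]
    exact Finset.prod_congr rfl fun i _ => by simp [hy, i.isLt, Nat.not_lt.mpr (Nat.lt_succ_iff.mp i.isLt)]
  rw [this]; exact htm

theorem eabs_of_isNAbsorbing {n : ℕ} {I : Ideal R} (h : IsNAbsorbing n I) : EAbs n I := by
  intro s x hcard hmem
  have hprod : (∏ i : Fin (n + 1), x (s.orderEmbOfFin hcard i)) = ∏ i ∈ s, x i :=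
    prod_orderEmbOfFin s hcard x
  obtain ⟨ι, hι, hιm⟩ := h (fun i => x (s.orderEmbOfFin hcard i)) (by rw [hprod]; exact hmem)
  refine ⟨Finset.image (fun j => s.orderEmbOfFin hcard (ι j)) Finset.univ, ?_, ?_, ?_⟩
  · intro a ha
    rcases Finset.mem_image.mp ha with ⟨j, _, rfl⟩
    exact s.orderEmbOfFin_mem hcard _
  · rw [show (fun j => s.orderEmbOfFin hcard (ι j)) = (s.orderEmbOfFin hcard) ∘ ι from rfl,
      Finset.card_image_of_injective _ ((s.orderEmbOfFin hcard).injective.comp hι.injective)]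
    simp
  · rw [Finset.prod_image (fun a _ b _ hab =>
      hι.injective ((s.orderEmbOfFin hcard).injective hab))]
    exact hιm

theorem gabs_of_eabs {n : ℕ} {I : Ideal R} (h : EAbs n I) : GAbs n I := by
  suffices H : ∀ k (s : Finset ℕ) (x : ℕ → R), s.card = k → n < k → (∏ i ∈ s, x i) ∈ I →
      ∃ t, t ⊆ s ∧ t.card = n ∧ (∏ i ∈ t, x i) ∈ I by
    intro s x hlt hmem; exact H s.card s x rfl hlt hmem
  intro k
  induction k using Nat.strong_induction_on with
  | _ k IH =>
    intro s x hcard hlt hmem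
    rcases eq_or_lt_of_le (Nat.succ_le_of_lt hlt) with heq | hlt2
    · exact h s x (hcard.trans heq.symm) hmem
    · -- k ≥ n + 2
      have hk2 : n + 2 ≤ k := hlt2
      have hcard2 : 2 ≤ s.card := by omega
      obtain ⟨a, ha⟩ := Finset.card_pos.mp (by omega : 0 < s.card)
      have : 0 < (s.erase a).card := by
        rw [Finset.card_erase_of_mem ha]; omega
      obtain ⟨b, hb⟩ := Finset.card_pos.mp this
      have hbs : b ∈ s := Finset.mem_of_mem_erase hb
      have hba : b ≠ a := Finset.ne_of_mem_erase hb
      obtain ⟨j, hj⟩ := Infinite.exists_notMem_finset s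
      set s₀ : Finset ℕ := (s.erase a).erase b with hs₀
      have hs₀s : s₀ ⊆ s := (Finset.erase_subset _ _).trans (Finset.erase_subset _ _)
      have hjs₀ : j ∉ s₀ := fun hmem' => hj (hs₀s hmem')
      have has₀ : a ∉ s₀ := fun hmem' =>
        (Finset.ne_of_mem_erase (Finset.mem_of_mem_erase hmem')) rfl
      have hbs₀ : b ∉ s₀ := fun hmem' => (Finset.ne_of_mem_erase hmem') rfl
      set x' : ℕ → R := Function.update x j (x a * x b) with hx'
      have hx'eq : ∀ i ∈ s₀, x' i = x i := fun i hi =>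
        Function.update_of_ne (fun hij => hjs₀ (by rw [← hij]; exact hi)) _ _
      set s' : Finset ℕ := insert j s₀ with hs'
      have hea : (s.erase a).card = k - 1 := by
        rw [Finset.card_erase_of_mem ha, hcard]
      have hs₀card : s₀.card = k - 2 := by
        rw [hs₀, Finset.card_erase_of_mem hb, hea]; omega
      have hs'card : s'.card = k - 1 := by
        rw [hs', Finset.card_insert_of_notMem hjs₀, hs₀card]; omega
      have hsplit : (∏ i ∈ s, x i) = x a * (x b * ∏ i ∈ s₀, x i) := by
        rw [Finset.mul_prod_erase _ _ hb, Finset.mul_prod_erase _ _ ha]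
      have hprod' : (∏ i ∈ s', x' i) = ∏ i ∈ s, x i := by
        rw [hs', Finset.prod_insert hjs₀, Finset.prod_congr rfl hx'eq]
        simp only [hx', Function.update_self]
        rw [hsplit, mul_assoc]
      obtain ⟨t, hts', htc, htm⟩ := IH (k - 1) (by omega) s' x' hs'card (by omega)
        (by rw [hprod']; exact hmem)
      by_cases hjt : j ∈ t
      · -- replace j with a, b
        set t₀ : Finset ℕ := t.erase j with ht₀
        have ht₀s₀ : t₀ ⊆ s₀ := by
          intro i hi
          have := hts' (Finset.mem_of_mem_erase hi)
          rcases Finset.mem_insert.mp this with h1 | h2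
          · exact absurd h1 (Finset.ne_of_mem_erase hi)
          · exact h2
        have hat₀ : a ∉ t₀ := fun hc => has₀ (ht₀s₀ hc)
        have hbt₀ : b ∉ t₀ := fun hc => hbs₀ (ht₀s₀ hc)
        have hx'eqt : ∀ i ∈ t₀, x' i = x i := fun i hi => hx'eq i (ht₀s₀ hi)
        set t' : Finset ℕ := insert a (insert b t₀) with ht'
        have hat' : a ∉ insert b t₀ := by
          simp only [Finset.mem_insert]; push_neg; exact ⟨fun h => hba h.symm, hat₀⟩
        have hn1 : 1 ≤ n := by rw [← htc]; exact Finset.card_pos.mpr ⟨j, hjt⟩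
        have ht'card : t'.card = n + 1 := by
          rw [ht', Finset.card_insert_of_notMem hat', Finset.card_insert_of_notMem hbt₀,
            ht₀, Finset.card_erase_of_mem hjt, htc]
          omega
        have ht's : t' ⊆ s := by
          intro i hi
          rcases Finset.mem_insert.mp hi with rfl | hi2
          · exact ha
          rcases Finset.mem_insert.mp hi2 with rfl | hi3
          · exact hbs
          · exact hs₀s (ht₀s₀ hi3)
        have ht'm : (∏ i ∈ t', x i) ∈ I := by
          have : (∏ i ∈ t', x i) = x' j * ∏ i ∈ t₀, x' i := by
            rw [ht', Finset.prod_insert hat', Finset.prod_insert hbt₀,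
              Finset.prod_congr rfl hx'eqt]
            simp only [hx', Function.update_self]; ring
          rw [this]
          have := Finset.mul_prod_erase _ x' hjt
          rw [← ht₀] at this
          rw [this]; exact htm
        obtain ⟨u, hut', huc, hum⟩ := h t' x ht'card ht'm
        exact ⟨u, hut'.trans ht's, huc, hum⟩
      · have hts : t ⊆ s := by
          intro i hi
          rcases Finset.mem_insert.mp (hts' hi) with rfl | h2
          · exact absurd hi hjt
          · exact hs₀s h2
        refine ⟨t, hts, htc, ?_⟩
        have : (∏ i ∈ t, x' i) = ∏ i ∈ t, x i := Finset.prod_congr rfl fun i hi =>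
          hx'eq i (by rcases Finset.mem_insert.mp (hts' hi) with rfl | h2
                      exacts [absurd hi hjt, h2])
        rwa [this] at htm

theorem eabs_top (n : ℕ) : EAbs n (⊤ : Ideal R) := by
  intro s x hcard _
  obtain ⟨t, hts, htc⟩ := Finset.exists_subset_card_eq (by omega : n ≤ s.card)
  exact ⟨t, hts, htc, trivial⟩

theorem eabs_succ {n : ℕ} {I : Ideal R} (h : EAbs n I) : EAbs (n + 1) I := by
  intro s x hcard hmem
  obtain ⟨t, hts, htc, htm⟩ := gabs_of_eabs h s x (by omega) hmem
  exact pad hts htm (by omega) (by omega)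

theorem eabs_mono {m n : ℕ} {I : Ideal R} (h : EAbs m I) (hmn : m ≤ n) : EAbs n I := by
  induction n, hmn using Nat.le_induction with
  | base => exact h
  | succ n _ IH => exact eabs_succ IH

theorem not_eabs_zero {I : Ideal R} (hI : I ≠ ⊤) : ¬ EAbs 0 I := by
  intro h
  obtain ⟨t, _, htc, htm⟩ := h {0} (fun _ => 0) (by simp) (by simp)
  rw [Finset.card_eq_zero.mp htc] at htm
  simp only [Finset.prod_empty] at htm
  exact hI (Ideal.eq_top_iff_one I |>.mpr htm)

theorem eabs_colon {n : ℕ} {I : Ideal R} (h : EAbs n I) (a : R) :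
    EAbs n (I.colon (Ideal.span {a})) := by
  intro s x hcard hmem
  rw [Ideal.mem_colon_span_singleton] at hmem
  obtain ⟨j, hj⟩ := Infinite.exists_notMem_finset s
  set x' : ℕ → R := Function.update x j a with hx'
  have hx'eq : ∀ i ∈ s, x' i = x i := fun i hi =>
    Function.update_of_ne (fun hij => hj (by rw [← hij]; exact hi)) _ _
  have hmem' : (∏ i ∈ insert j s, x' i) ∈ I := by
    rw [Finset.prod_insert hj, Finset.prod_congr rfl hx'eq]
    simp only [hx', Function.update_self]
    rwa [mul_comm]
  obtain ⟨t, hts', htc, htm⟩ := gabs_of_eabs h (insert j s) x'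
    (by rw [Finset.card_insert_of_notMem hj]; omega) hmem'
  by_cases hjt : j ∈ t
  · set t₀ : Finset ℕ := t.erase j with ht₀
    have ht₀s : t₀ ⊆ s := by
      intro i hi
      rcases Finset.mem_insert.mp (hts' (Finset.mem_of_mem_erase hi)) with h1 | h2
      · exact absurd h1 (Finset.ne_of_mem_erase hi)
      · exact h2
    have htm' : (∏ i ∈ t₀, x i) ∈ I.colon (Ideal.span {a}) := by
      rw [Ideal.mem_colon_span_singleton]
      have : (∏ i ∈ t₀, x i) * a = ∏ i ∈ t, x' i := by
        rw [← Finset.mul_prod_erase _ x' hjt, ← ht₀, Finset.prod_congr rfl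
          (fun i hi => hx'eq i (ht₀s hi))]
        simp only [hx', Function.update_self]; ring
      rwa [this]
    exact pad ht₀s htm' (by rw [ht₀, Finset.card_erase_of_mem hjt, htc]; omega) (by omega)
  · have hts : t ⊆ s := by
      intro i hi
      rcases Finset.mem_insert.mp (hts' hi) with rfl | h2
      · exact absurd hi hjt
      · exact h2
    refine ⟨t, hts, htc, ?_⟩
    have : (∏ i ∈ t, x' i) = ∏ i ∈ t, x i :=
      Finset.prod_congr rfl fun i hi => hx'eq i (hts hi)
    rw [this] at htm
    exact Ideal.mem_colon_span_singleton.mpr (Ideal.mul_mem_right a I htm)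

theorem eabs_inf {m n : ℕ} {I J : Ideal R} (hI : EAbs m I) (hJ : EAbs n J) :
    EAbs (m + n) (I ⊓ J) := by
  intro s x hcard hmem
  obtain ⟨t1, ht1s, ht1c, ht1m⟩ := gabs_of_eabs hI s x (by omega) hmem.1
  obtain ⟨t2, ht2s, ht2c, ht2m⟩ := gabs_of_eabs hJ s x (by omega) hmem.2
  have hu : t1 ∪ t2 ⊆ s := Finset.union_subset ht1s ht2s
  have hum : (∏ i ∈ t1 ∪ t2, x i) ∈ I ⊓ J := by
    constructor
    · rw [← Finset.prod_sdiff (Finset.subset_union_left : t1 ⊆ t1 ∪ t2)]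
      exact Ideal.mul_mem_left _ _ ht1m
    · rw [← Finset.prod_sdiff (Finset.subset_union_right : t2 ⊆ t1 ∪ t2)]
      exact Ideal.mul_mem_left _ _ ht2m
  exact pad hu hum (le_trans (Finset.card_union_le _ _) (by omega)) (by omega)

theorem prod_mem_pow {M : Ideal R} (t : Finset ℕ) (x : ℕ → R) (h : ∀ i ∈ t, x i ∈ M) :
    (∏ i ∈ t, x i) ∈ M ^ t.card := by
  classical
  induction t using Finset.induction with
  | empty => simp [Ideal.one_eq_top]
  | @insert a t ha IH =>
    rw [Finset.prod_insert ha, Finset.card_insert_of_notMem ha, pow_succ, mul_comm (x a)]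
    exact Ideal.mul_mem_mul (IH fun i hi => h i (Finset.mem_insert_of_mem hi))
      (h a (Finset.mem_insert_self a t))

/-- A proper ideal containing the `N`-th power of a maximal ideal is `N`-absorbing. -/
theorem eabs_maxpow {M : Ideal R} (hM : M.IsMaximal) {N : ℕ} (hN : 0 < N)
    {K : Ideal R} (hMK : M ^ N ≤ K) : EAbs N K := by
  intro s x hcard hmem
  by_cases hall : ∀ i ∈ s, x i ∈ M
  · obtain ⟨t, hts, htc⟩ := Finset.exists_subset_card_eq (by omega : N ≤ s.card)
    refine ⟨t, hts, htc, hMK ?_⟩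
    rw [← htc]
    exact prod_mem_pow t x fun i hi => hall i (hts hi)
  · push_neg at hall
    obtain ⟨i, his, hiM⟩ := hall
    have hsup : K ⊔ Ideal.span {x i} = ⊤ := by
      by_contra hne
      obtain ⟨M', hM', hle⟩ := Ideal.exists_le_maximal _ hne
      have h1 : M ≤ M' := hM'.isPrime.le_of_pow_le (hMK.trans (le_sup_left.trans hle))
      have h2 : M = M' := hM.eq_of_le hM'.ne_top h1
      exact hiM (h2 ▸ hle (le_sup_right (a := K) (Ideal.mem_span_singleton_self (x i))))
    obtain ⟨k, hk, z, hz, hkz⟩ := Submodule.mem_sup.mp (hsup ▸ Submodule.mem_top (x := (1 : R)))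
    obtain ⟨r, hr⟩ := Ideal.mem_span_singleton'.mp hz
    refine ⟨s.erase i, Finset.erase_subset _ _,
      by rw [Finset.card_erase_of_mem his, hcard]; omega, ?_⟩
    have hsplit : x i * ∏ j ∈ s.erase i, x j = ∏ j ∈ s, x j := Finset.mul_prod_erase _ _ his
    have key : (∏ j ∈ s.erase i, x j)
        = (∏ j ∈ s.erase i, x j) * k + r * ∏ j ∈ s, x j := by
      calc (∏ j ∈ s.erase i, x j) = (∏ j ∈ s.erase i, x j) * (k + z) := by rw [hkz, mul_one]
        _ = (∏ j ∈ s.erase i, x j) * k + r * ∏ j ∈ s, x j := by rw [← hsplit, ← hr]; ring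
    rw [key]
    exact Ideal.add_mem _ (Ideal.mul_mem_left _ _ hk) (Ideal.mul_mem_left _ _ hmem)

theorem sup_mul_sup (I J1 J2 : Ideal R) (h : J1 ⊔ J2 = ⊤) :
    I ⊔ J1 * J2 = (I ⊔ J1) ⊓ (I ⊔ J2) := by
  refine le_antisymm (le_inf (sup_le_sup_left Ideal.mul_le_left _ |>.trans ?_ )
    (sup_le_sup_left Ideal.mul_le_right _ |>.trans ?_)) ?_
  · exact le_rfl
  · exact le_rfl
  · intro y hy
    obtain ⟨hy1, hy2⟩ := hy
    obtain ⟨a, ha, b, hb, hab⟩ := Submodule.mem_sup.mp (h ▸ Submodule.mem_top (x := (1 : R)))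
    have hya : y * a ∈ I ⊔ J1 * J2 := by
      obtain ⟨ii, hii, j2, hj2, hij⟩ := Submodule.mem_sup.mp hy2
      rw [← hij, add_mul]
      refine Ideal.add_mem _ (Ideal.mem_sup_left (Ideal.mul_mem_right _ _ hii))
        (Ideal.mem_sup_right ?_)
      rw [mul_comm j2 a]
      exact Ideal.mul_mem_mul ha hj2
    have hyb : y * b ∈ I ⊔ J1 * J2 := by
      obtain ⟨ii, hii, j1, hj1, hij⟩ := Submodule.mem_sup.mp hy1
      rw [← hij, add_mul]
      exact Ideal.add_mem _ (Ideal.mem_sup_left (Ideal.mul_mem_right _ _ hii))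
        (Ideal.mem_sup_right (Ideal.mul_mem_mul hj1 hb))
    have : y = y * a + y * b := by rw [← mul_add, hab, mul_one]
    rw [this]
    exact Ideal.add_mem _ hya hyb

theorem sup_prod_eq_inf {ι : Type*} [DecidableEq ι] (I : Ideal R) (s : Finset ι)
    (Q : ι → Ideal R) (hco : ∀ a ∈ s, ∀ b ∈ s, a ≠ b → Q a ⊔ Q b = ⊤) :
    I ⊔ ∏ t ∈ s, Q t = s.inf fun t => I ⊔ Q t := by
  induction s using Finset.induction with
  | empty => simp
  | @insert a s ha IH =>
    rw [Finset.prod_insert ha, Finset.inf_insert,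
      ← IH (fun a ha' b hb' hab => hco a (Finset.mem_insert_of_mem ha')
        b (Finset.mem_insert_of_mem hb') hab)]
    apply sup_mul_sup
    rw [← Ideal.isCoprime_iff_sup_eq]
    apply IsCoprime.prod_right
    intro b hb
    rw [Ideal.isCoprime_iff_sup_eq]
    exact hco a (Finset.mem_insert_self a s) b (Finset.mem_insert_of_mem hb)
      (fun hab => ha (hab ▸ hb))

theorem eabs_finset_inf {ι : Type*} [DecidableEq ι] {N : ℕ} (s : Finset ι) (f : ι → Ideal R)
    (h : ∀ a ∈ s, EAbs N (f a)) : EAbs (N * s.card) (s.inf f) := by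
  induction s using Finset.induction with
  | empty => simpa using eabs_top 0
  | @insert a s ha IH =>
    rw [Finset.inf_insert, Finset.card_insert_of_notMem ha]
    have : N * (s.card + 1) = N + N * s.card := by ring
    rw [this]
    exact eabs_inf (h a (Finset.mem_insert_self a s))
      (IH fun b hb => h b (Finset.mem_insert_of_mem hb))

end OmegaAux

namespace OmegaAux

variable {R : Type*} [CommRing R]

theorem isNAbsorbing_mono {m n : ℕ} {I : Ideal R} (h : IsNAbsorbing m I) (hmn : m ≤ n) :
    IsNAbsorbing n I :=
  isNAbsorbing_of_eabs (eabs_mono (eabs_of_isNAbsorbing h) hmn)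

theorem omegaR_le {n : ℕ} {I : Ideal R} (hn : 0 < n) (h : IsNAbsorbing n I) :
    omegaR I ≤ n :=
  sInf_le ⟨n, hn, rfl, h⟩

theorem one_le_omegaR {I : Ideal R} : 1 ≤ omegaR I :=
  le_sInf (by rintro w ⟨n, hn, rfl, -⟩; exact_mod_cast hn)

theorem lt_omegaR {n : ℕ} {I : Ideal R} (h : ¬ IsNAbsorbing n I) : (n : ℕ∞) < omegaR I := by
  have h1 : ((n + 1 : ℕ) : ℕ∞) ≤ omegaR I := by
    apply le_sInf
    rintro w ⟨m, hm, rfl, hA⟩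
    have : n < m := by
      by_contra h'
      exact h (isNAbsorbing_mono hA (by omega))
    exact_mod_cast this
  calc (n : ℕ∞) < ((n + 1 : ℕ) : ℕ∞) := by exact_mod_cast Nat.lt_succ_self n
    _ ≤ omegaR I := h1

theorem coe_le_of_pred_lt {n : ℕ} {w : ℕ∞} (h : ((n - 1 : ℕ) : ℕ∞) < w) :
    (n : ℕ∞) ≤ w := by
  induction w using ENat.recTopCoe with
  | top => exact le_top
  | coe m =>
    have : n - 1 < m := by exact_mod_cast h
    exact_mod_cast (by omega : n ≤ m)

theorem omegaR_eq {n : ℕ} {I : Ideal R} (hn : 0 < n) (h1 : IsNAbsorbing n I)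
    (h2 : ¬ IsNAbsorbing (n - 1) I) : omegaR I = n :=
  le_antisymm (omegaR_le hn h1) (coe_le_of_pred_lt (lt_omegaR h2))

theorem omegaR_natval {n₀ : ℕ} {I : Ideal R} (hn₀ : 0 < n₀) (hub : EAbs n₀ I) :
    ∃ k : ℕ, 0 < k ∧ k ≤ n₀ ∧ omegaR I = k := by
  have hle : omegaR I ≤ (n₀ : ℕ∞) := omegaR_le hn₀ (isNAbsorbing_of_eabs hub)
  have hne : omegaR I ≠ ⊤ := fun h => by
    rw [h] at hle
    exact (ENat.coe_lt_top n₀).not_ge hle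
  have hk : ((omegaR I).toNat : ℕ∞) = omegaR I := ENat.coe_toNat hne
  refine ⟨(omegaR I).toNat, ?_, ?_, hk.symm⟩
  · have h1 := one_le_omegaR (I := I)
    rw [← hk] at h1
    have : 1 ≤ (omegaR I).toNat := by exact_mod_cast h1
    omega
  · rw [← hk] at hle
    exact_mod_cast hle

theorem exists_absorb_of_omegaR_eq {n₀ k : ℕ} {I : Ideal R} (hI : I ≠ ⊤)
    (hub : EAbs n₀ I) (hω : omegaR I = (k : ℕ∞)) :
    0 < k ∧ IsNAbsorbing k I ∧ ¬ IsNAbsorbing (k - 1) I := by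
  have hk : 0 < k := by
    have := one_le_omegaR (I := I)
    rw [hω] at this
    exact_mod_cast this
  have hA : IsNAbsorbing k I := by
    have hlt : omegaR I < ((k + 1 : ℕ) : ℕ∞) := by
      rw [hω]
      exact_mod_cast Nat.lt_succ_self k
    unfold omegaR at hlt
    obtain ⟨w, hwS, hwlt⟩ := sInf_lt_iff.mp hlt
    obtain ⟨m, hm, rfl, hAm⟩ := hwS
    have : m < k + 1 := by exact_mod_cast hwlt
    exact isNAbsorbing_mono hAm (by omega)
  refine ⟨hk, hA, fun hcontra => ?_⟩
  by_cases hk1 : k = 1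
  · subst hk1
    exact not_eabs_zero hI (eabs_of_isNAbsorbing hcontra)
  · have hle := omegaR_le (n := k - 1) (by omega) hcontra
    rw [hω] at hle
    have : k ≤ k - 1 := by exact_mod_cast hle
    omega

theorem colon_colon (K : Ideal R) (c a : R) :
    (K.colon (Ideal.span {c})).colon (Ideal.span {a}) = K.colon (Ideal.span {c * a}) := by
  ext r
  rw [Ideal.mem_colon_span_singleton, Ideal.mem_colon_span_singleton, Ideal.mem_colon_span_singleton,
    mul_assoc, mul_comm a c]

theorem colon_one (K : Ideal R) : K.colon (Ideal.span {(1 : R)}) = K := by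
  ext r
  rw [Ideal.mem_colon_span_singleton, mul_one]

theorem omegaR_prime {P : Ideal R} (hP : P.IsPrime) : omegaR P = (1 : ℕ) := by
  apply omegaR_eq one_pos
  · intro x hx
    rw [Fin.prod_univ_two] at hx
    have hmono : ∀ g : Fin 1 → Fin 2, StrictMono g := fun g a b h =>
      absurd (Subsingleton.elim a b) (ne_of_lt h)
    rcases hP.mem_or_mem hx with h | h
    · exact ⟨fun _ => 0, hmono _, by rw [Fin.prod_univ_one]; exact h⟩
    · exact ⟨fun _ => 1, hmono _, by rw [Fin.prod_univ_one]; exact h⟩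
  · intro h0
    exact not_eabs_zero hP.ne_top (eabs_of_isNAbsorbing h0)

section Artinian

variable [IsArtinianRing R]

theorem pow_mono {I J : Ideal R} (h : I ≤ J) (n : ℕ) : I ^ n ≤ J ^ n := by
  induction n with
  | zero => simp
  | succ n IH => rw [pow_succ, pow_succ]; exact Ideal.mul_mono IH h

theorem exists_uniform_bound :
    ∃ n₀ : ℕ, 0 < n₀ ∧ ∀ I : Ideal R, I ≠ ⊤ → EAbs n₀ I := by
  classical
  obtain ⟨N₀, hN₀⟩ := IsArtinianRing.isNilpotent_jacobson_bot (R := R)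
  set N := N₀ + 1 with hN
  have hjac : (Ideal.jacobson (⊥ : Ideal R)) ^ N = ⊥ := by
    rw [hN, pow_succ, hN₀, zero_mul]
    exact Ideal.zero_eq_bot
  set MS : Finset (Ideal R) := (IsArtinianRing.setOfPred_isMaximal_finite R).toFinset with hMS
  have hMSmem : ∀ M : Ideal R, M ∈ MS ↔ M.IsMaximal := fun M => Set.Finite.mem_toFinset _
  have hprodbot : (∏ M ∈ MS, M ^ N) = ⊥ := by
    have h1 : (∏ M ∈ MS, M) ≤ Ideal.jacobson ⊥ := by
      apply le_sInf
      rintro J ⟨-, hJmax⟩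
      exact Ideal.prod_le_inf.trans (Finset.inf_le ((hMSmem J).mpr hJmax))
    have h2 : (∏ M ∈ MS, M ^ N) ≤ (Ideal.jacobson (⊥ : Ideal R)) ^ N := by
      rw [Finset.prod_pow]
      exact pow_mono h1 N
    rw [hjac] at h2
    exact le_bot_iff.mp h2
  refine ⟨N * MS.card + 1, by omega, fun I hI => ?_⟩
  have hdecomp : I = MS.inf fun M => I ⊔ M ^ N := by
    have hco : ∀ a ∈ MS, ∀ b ∈ MS, a ≠ b → a ^ N ⊔ b ^ N = ⊤ := by
      intro a ha b hb hab
      rw [← Ideal.isCoprime_iff_sup_eq]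
      exact (Ideal.isCoprime_iff_sup_eq.mpr
        (((hMSmem a).mp ha).coprime_of_ne ((hMSmem b).mp hb) hab)).pow
    have := sup_prod_eq_inf I MS (fun M => M ^ N) hco
    rw [← this, hprodbot, sup_bot_eq]
  have habs : EAbs (N * MS.card) I := by
    rw [hdecomp]
    apply eabs_finset_inf
    intro M hM
    by_cases htop : I ⊔ M ^ N = ⊤
    · rw [htop]; exact eabs_top N
    · exact eabs_maxpow ((hMSmem M).mp hM) (by omega) le_sup_right
  exact eabs_mono habs (by omega)

theorem down_aux {k : ℕ} (hk : 2 ≤ k) (K₀ : Ideal R) :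
    ∀ D : Ideal R, ∀ c : R, K₀ ⊔ Ideal.span {c} = D →
      K₀.colon (Ideal.span {c}) ≠ ⊤ →
      EAbs k (K₀.colon (Ideal.span {c})) →
      ¬ EAbs (k - 1) (K₀.colon (Ideal.span {c})) →
      ∃ J : Ideal R, J ≠ ⊤ ∧ EAbs (k - 1) J ∧ ¬ EAbs (k - 2) J := by
  intro D
  induction D using WellFoundedLT.induction with
  | _ D IH =>
  intro c hD hprop habs hnabs
  set K := K₀.colon (Ideal.span {c}) with hK
  unfold EAbs at hnabs
  push_neg at hnabs
  obtain ⟨s, x, hscard, hsmem, hwit⟩ := hnabs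
  have hscard' : s.card = k := by omega
  obtain ⟨i₀, hi₀⟩ := Finset.card_pos.mp (by omega : 0 < s.card)
  set a := x i₀ with ha
  set J := K.colon (Ideal.span {a}) with hJ'
  have hKJ : K ≤ J := fun r hr => Ideal.mem_colon_span_singleton.mpr (Ideal.mul_mem_right _ _ hr)
  have herase : (s.erase i₀).card = k - 1 := by rw [Finset.card_erase_of_mem hi₀]; omega
  have hzJ : (∏ j ∈ s.erase i₀, x j) ∈ J := by
    rw [hJ', Ideal.mem_colon_span_singleton, ha, Finset.prod_erase_mul _ _ hi₀]
    exact hsmem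
  have hzK : (∏ j ∈ s.erase i₀, x j) ∉ K := hwit _ (Finset.erase_subset _ _) herase
  have hJprop : J ≠ ⊤ := by
    intro htop
    have h1 : (1 : R) ∈ J := htop ▸ Submodule.mem_top
    have haK : a ∈ K := by
      rw [hJ', Ideal.mem_colon_span_singleton, one_mul] at h1
      exact h1
    obtain ⟨t, hts, htc, htm⟩ := pad (t := {i₀}) (s := s) (x := x) (n := k - 1)
      (Finset.singleton_subset_iff.mpr hi₀)
      (by rw [Finset.prod_singleton, ← ha]; exact haK)
      (by rw [Finset.card_singleton]; omega) (by omega)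
    exact hwit t hts htc htm
  have hJabs : EAbs k J := by rw [hJ', hK]; exact eabs_colon habs a
  by_cases hJgood : EAbs (k - 1) J
  · refine ⟨J, hJprop, hJgood, ?_⟩
    intro hbad
    obtain ⟨t, hts, htc, htm⟩ := hbad (s.erase i₀) x (by omega) hzJ
    have htm' : (∏ j ∈ t, x j) * a ∈ K := by
      rw [hJ', Ideal.mem_colon_span_singleton] at htm
      exact htm
    have hi₀t : i₀ ∉ t := fun hc => (Finset.notMem_erase i₀ s) (hts hc)
    rw [ha] at htm'
    have hins : (∏ j ∈ insert i₀ t, x j) ∈ K := by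
      rw [Finset.prod_insert hi₀t, mul_comm]
      exact htm'
    exact hwit (insert i₀ t) (Finset.insert_subset hi₀ (hts.trans (Finset.erase_subset _ _)))
      (by rw [Finset.card_insert_of_notMem hi₀t, htc]; omega) hins
  · have hcolon2 : J = K₀.colon (Ideal.span {c * a}) := by rw [hJ', hK, colon_colon]
    have hDle : K₀ ⊔ Ideal.span {c * a} ≤ D := by
      rw [← hD]
      refine sup_le_sup_left ?_ _
      rw [Ideal.span_le, Set.singleton_subset_iff]
      exact Ideal.mul_mem_right a _ (Ideal.mem_span_singleton_self c)
    have hDne : K₀ ⊔ Ideal.span {c * a} ≠ D := by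
      intro heq
      have hc : c ∈ K₀ ⊔ Ideal.span {c * a} := by
        rw [heq, ← hD]
        exact Ideal.mem_sup_right (Ideal.mem_span_singleton_self c)
      obtain ⟨κ, hκ, z, hz, hkz⟩ := Submodule.mem_sup.mp hc
      obtain ⟨r, hr⟩ := Ideal.mem_span_singleton'.mp hz
      apply hzK
      rw [hK, Ideal.mem_colon_span_singleton]
      have hPca : (∏ j ∈ s.erase i₀, x j) * (c * a) ∈ K₀ := by
        have h2 := hzJ
        rw [hcolon2, Ideal.mem_colon_span_singleton] at h2
        exact h2
      have e1 : (∏ j ∈ s.erase i₀, x j) * c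
          = (∏ j ∈ s.erase i₀, x j) * κ + (∏ j ∈ s.erase i₀, x j) * z := by
        rw [← hkz]; ring
      have e2 : (∏ j ∈ s.erase i₀, x j) * z
          = r * ((∏ j ∈ s.erase i₀, x j) * (c * a)) := by
        rw [← hr]; ring
      rw [e1, e2]
      exact Ideal.add_mem _ (Ideal.mul_mem_left _ _ hκ) (Ideal.mul_mem_left _ _ hPca)
    rw [hcolon2] at hJprop hJabs hJgood
    exact IH _ (lt_of_le_of_ne hDle hDne) (c * a) rfl hJprop hJabs hJgood

end Artinian

end OmegaAux

/-- For a nontrivial artinian commutative ring `R`, `Ω(R) = {1, …, n}` for some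
positive integer `n`; moreover `Ω(R) = {1}` iff `R` is a field. -/
theorem omegaSet_artinian {R : Type*} [CommRing R] [Nontrivial R] [IsArtinianRing R] :
    (∃ n : ℕ, 0 < n ∧
      OmegaSet R = {w : ℕ∞ | ∃ k : ℕ, 1 ≤ k ∧ k ≤ n ∧ w = (k : ℕ∞)}) ∧
    (OmegaSet R = {(1 : ℕ∞)} ↔ IsField R) := by
  classical
  obtain ⟨n₀, hn₀pos, hub⟩ := OmegaAux.exists_uniform_bound (R := R)
  have hbotne : (⊥ : Ideal R) ≠ ⊤ := fun h =>
    (one_ne_zero : (1 : R) ≠ 0) (Ideal.mem_bot.mp ((Ideal.eq_top_iff_one _).mp h))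
  have hval : ∀ I : Ideal R, I ≠ ⊤ → ∃ k : ℕ, 0 < k ∧ k ≤ n₀ ∧ omegaR I = (k : ℕ∞) :=
    fun I hI => OmegaAux.omegaR_natval hn₀pos (hub I hI)
  set S : Set ℕ := {k | ∃ I : Ideal R, I ≠ ⊤ ∧ omegaR I = (k : ℕ∞)} with hS
  obtain ⟨Mx, hMx⟩ := Ideal.exists_maximal R
  have homega_max : omegaR Mx = ((1 : ℕ) : ℕ∞) := OmegaAux.omegaR_prime hMx.isPrime
  have h1S : (1 : ℕ) ∈ S := ⟨Mx, hMx.ne_top, homega_max⟩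
  have hSbdd : BddAbove S := by
    refine ⟨n₀, ?_⟩
    rintro k ⟨I, hI, hωI⟩
    obtain ⟨k', hk'pos, hk'le, hωI'⟩ := hval I hI
    have hkk : k = k' := by
      rw [hωI] at hωI'
      exact_mod_cast hωI'
    omega
  set n := sSup S with hn
  have hnS : n ∈ S := Nat.sSup_mem ⟨1, h1S⟩ hSbdd
  have hn1 : 1 ≤ n := le_csSup hSbdd h1S
  -- downward closure of the value set
  have hdown : ∀ k, 2 ≤ k → k ∈ S → (k - 1) ∈ S := by
    rintro k hk ⟨I, hI, hωI⟩
    obtain ⟨hpos, hA, hnA⟩ := OmegaAux.exists_absorb_of_omegaR_eq hI (hub I hI) hωI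
    have h1 : I.colon (Ideal.span {(1 : R)}) = I := OmegaAux.colon_one I
    obtain ⟨J, hJne, hJ1, hJ2⟩ := OmegaAux.down_aux hk I (I ⊔ Ideal.span {(1 : R)}) 1 rfl
      (by rw [h1]; exact hI)
      (by rw [h1]; exact OmegaAux.eabs_of_isNAbsorbing hA)
      (by rw [h1]; exact fun h => hnA (OmegaAux.isNAbsorbing_of_eabs h))
    refine ⟨J, hJne, OmegaAux.omegaR_eq (by omega) (OmegaAux.isNAbsorbing_of_eabs hJ1) ?_⟩
    intro hA2
    have : k - 1 - 1 = k - 2 := by omega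
    rw [this] at hA2
    exact hJ2 (OmegaAux.eabs_of_isNAbsorbing hA2)
  have hall : ∀ j, 1 ≤ j → j ≤ n → j ∈ S := by
    have key : ∀ d, ∀ j, 1 ≤ j → j + d = n → j ∈ S := by
      intro d
      induction d with
      | zero => intro j _ hjn; rw [show j = n by omega]; exact hnS
      | succ d IH =>
        intro j hj1 hjn
        have hj1S : (j + 1) ∈ S := IH (j + 1) (by omega) (by omega)
        have := hdown (j + 1) (by omega) hj1S
        simpa using this
    intro j hj1 hjn
    exact key (n - j) j hj1 (by omega)
  have homegabot : ∀ (hdom : IsDomain R), omegaR (⊥ : Ideal R) = ((1 : ℕ) : ℕ∞) :=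
    fun hdom => OmegaAux.omegaR_prime Ideal.bot_prime
  constructor
  · refine ⟨n, by omega, ?_⟩
    ext w
    simp only [OmegaSet, Set.mem_setOf_eq]
    constructor
    · rintro ⟨I, hI, rfl⟩
      obtain ⟨k, hkpos, hkle, hωI⟩ := hval I hI
      have hkS : k ∈ S := ⟨I, hI, hωI⟩
      exact ⟨k, hkpos, le_csSup hSbdd hkS, hωI⟩
    · rintro ⟨k, hk1, hkn, rfl⟩
      obtain ⟨I, hI, hωI⟩ := hall k hk1 hkn
      exact ⟨I, hI, hωI⟩
  · constructor
    · intro hΩ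
      have hmem : omegaR (⊥ : Ideal R) ∈ OmegaSet R := ⟨⊥, hbotne, rfl⟩
      rw [hΩ, Set.mem_singleton_iff] at hmem
      have hωbot : omegaR (⊥ : Ideal R) = ((1 : ℕ) : ℕ∞) := by
        rw [hmem]; norm_num
      obtain ⟨-, hA, -⟩ := OmegaAux.exists_absorb_of_omegaR_eq hbotne (hub ⊥ hbotne) hωbot
      have hdom : ∀ u v : R, u * v = 0 → u = 0 ∨ v = 0 := by
        intro u v huv
        set xx : Fin 2 → R := fun i => if i = 0 then u else v with hxx
        have hprod : (∏ i, xx i) ∈ (⊥ : Ideal R) := by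
          rw [Fin.prod_univ_two]
          simp [hxx, huv]
        obtain ⟨ι, hι, hmem'⟩ := hA xx hprod
        rw [Fin.prod_univ_one] at hmem'
        by_cases hι0 : ι 0 = 0
        · left
          rw [hι0] at hmem'
          simpa [hxx] using Ideal.mem_bot.mp hmem'
        · right
          have hv : (ι 0).val ≠ 0 := fun h => hι0 (Fin.ext h)
          have h2 := (ι 0).isLt
          have hval : (ι 0).val = 1 := by omega
          have : ι 0 = 1 := Fin.ext (by rw [hval, Fin.val_one])
          rw [this] at hmem'
          simpa [hxx] using Ideal.mem_bot.mp hmem'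
      haveI : NoZeroDivisors R := ⟨fun {u v} h => hdom u v h⟩
      haveI : IsDomain R := NoZeroDivisors.to_isDomain R
      haveI : (⊥ : Ideal R).IsPrime := Ideal.bot_prime
      haveI hbotmax : (⊥ : Ideal R).IsMaximal := IsArtinianRing.isMaximal_of_isPrime ⊥
      refine ⟨exists_pair_ne R, mul_comm, ?_⟩
      intro a ha
      have hspan : Ideal.span {a} = ⊤ := by
        by_contra hne
        have : (⊥ : Ideal R) = Ideal.span {a} := hbotmax.eq_of_le hne bot_le
        exact ha (Ideal.mem_bot.mp (this ▸ Ideal.mem_span_singleton_self a))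
      obtain ⟨b, hb⟩ := isUnit_iff_exists_inv.mp (Ideal.span_singleton_eq_top.mp hspan)
      exact ⟨b, hb⟩
    · intro hF
      letI := hF.toField
      have hωbot : omegaR (⊥ : Ideal R) = ((1 : ℕ) : ℕ∞) :=
        OmegaAux.omegaR_prime Ideal.bot_prime
      ext w
      simp only [OmegaSet, Set.mem_setOf_eq, Set.mem_singleton_iff]
      constructor
      · rintro ⟨I, hI, rfl⟩
        have hIbot : I = ⊥ := (I.eq_bot_or_top).resolve_right hI
        rw [hIbot, hωbot]
        norm_num
      · rintro rfl
        exact ⟨⊥, hbotne, by rw [hωbot]; norm_num⟩
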